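/- Let k ≥ 2 and let T be a clause tree for x₁,…,x_k. Any assignment I : {x₁,…,x_k} → {0,1} can be extended to an optimal assignment of Tᵗ(T) satisfying exactly 2(k−1) of its constraints, by setting, for every internal node v, I(b_v) equal to the OR of the values of the leaves below v; in particular this optimal extension assigns the root's variable the value I(x₁ ∨ ⋯ ∨ x_k). -/

import Mathlib

/-- A (candidate) clause tree: a full binary tree whose leaves are labeled by (indices of)
the clause variables x_i and whose internal nodes carry (indices of) auxiliary variables
b_v.  Leaf labels are interpreted by an assignment `x : ℕ → Bool` and internal labels by
an assignment `b : ℕ → Bool`. -/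
inductive ClauseTree : Type
  | leaf (i : ℕ)
  | node (v : ℕ) (l r : ClauseTree)

namespace ClauseTree

/-- Labels of the leaves, left to right. -/
def leaves : ClauseTree → List ℕ
  | leaf i => [i]
  | node _ l r => leaves l ++ leaves r

/-- Labels of the internal nodes. -/
def internals : ClauseTree → List ℕ
  | leaf _ => []
  | node v l r => v :: (internals l ++ internals r)

/-- `t` is a clause tree for x₁,…,x_k: its leaves are labeled bijectively by 1,…,k and
its internal auxiliary variables are pairwise distinct (they are fresh by construction,
living in a namespace separate from the leaf labels). -/
def IsClauseTree (k : ℕ) (t : ClauseTree) : Prop :=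
  t.leaves.Nodup ∧ (∀ i, i ∈ t.leaves ↔ i ∈ Finset.Icc 1 k) ∧ t.internals.Nodup

/-- var(v) of the root of `t`: the value of the leaf variable if `t` is a leaf, and the
value of the auxiliary variable b_v if the root is an internal node v. -/
def rootVar (x b : ℕ → Bool) : ClauseTree → Bool
  | leaf i => x i
  | node v _ _ => b v

/-- Number of satisfied constraints among the triangle {p ⊕ q = 1, p ⊕ r = 0, q ⊕ r = 0}. -/
def triCount (p q r : Bool) : ℕ :=
  (if xor p q = true then 1 else 0) +
  (if xor p r = false then 1 else 0) +
  (if xor q r = false then 1 else 0)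

/-- Number of constraints of Tᵗ(t) satisfied by the assignment given by `x` and `b`:
for every internal node v with children u, w, the triangle
{var(u) ⊕ var(w) = 1, var(u) ⊕ b_v = 0, var(w) ⊕ b_v = 0} (each of weight 1/2). -/
def countSat (x b : ℕ → Bool) : ClauseTree → ℕ
  | leaf _ => 0
  | node v l r =>
      countSat x b l + countSat x b r + triCount (rootVar x b l) (rootVar x b r) (b v)

/-- Total number of constraints of Tᵗ(t). -/
def numConstraints : ClauseTree → ℕ
  | leaf _ => 0
  | node _ l r => numConstraints l + numConstraints r + 3

/-- The OR of the values of the leaves below (the root of) `t`. -/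
def orLeaves (x : ℕ → Bool) : ClauseTree → Bool
  | leaf i => x i
  | node _ l r => orLeaves x l || orLeaves x r

/-- The assignment `b` of the internal auxiliary variables agrees with the canonical
extension of `x`: every internal node v gets the OR of the values of the leaves below v. -/
def Agrees (x b : ℕ → Bool) : ClauseTree → Prop
  | leaf _ => True
  | node v l r => b v = orLeaves x (node v l r) ∧ Agrees x b l ∧ Agrees x b r

end ClauseTree

namespace ClauseTree

/-- Canonical extension: look up the subtree rooted at internal label `v`. -/
def findOr (x : ℕ → Bool) : ClauseTree → ℕ → Bool
  | leaf _, _ => false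
  | node w l r, v =>
      if v = w then orLeaves x (node w l r)
      else if v ∈ l.internals then findOr x l v else findOr x r v

lemma agrees_congr (x b b' : ℕ → Bool) :
    ∀ t : ClauseTree, (∀ v ∈ t.internals, b' v = b v) → Agrees x b t → Agrees x b' t := by
  intro t
  induction t with
  | leaf i => intro _ _; trivial
  | node v l r ihl ihr =>
      intro h hb
      refine ⟨?_, ?_, ?_⟩
      · rw [h v (by simp [internals])]; exact hb.1
      · exact ihl (fun u hu => h u (by simp [internals, hu])) hb.2.1
      · exact ihr (fun u hu => h u (by simp [internals, hu])) hb.2.2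

lemma agrees_findOr (x : ℕ → Bool) :
    ∀ t : ClauseTree, t.internals.Nodup → Agrees x (findOr x t) t := by
  intro t
  induction t with
  | leaf i => intro _; trivial
  | node v l r ihl ihr =>
      intro hnd
      have hnd' : (l.internals ++ r.internals).Nodup ∧ v ∉ l.internals ++ r.internals := by
        simpa [internals, List.nodup_cons, and_comm] using hnd
      have hvl : v ∉ l.internals := fun h => hnd'.2 (List.mem_append_left _ h)
      have hvr : v ∉ r.internals := fun h => hnd'.2 (List.mem_append_right _ h)
      have hdisj := (List.nodup_append'.mp hnd'.1).2.2
      refine ⟨by simp [findOr], ?_, ?_⟩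
      · refine agrees_congr x (findOr x l) _ l ?_ (ihl (List.nodup_append.mp hnd'.1).1)
        intro u hu
        have huv : u ≠ v := fun h => hvl (h ▸ hu)
        simp [findOr, huv, hu]
      · refine agrees_congr x (findOr x r) _ r ?_ (ihr (List.nodup_append.mp hnd'.1).2.1)
        intro u hu
        have huv : u ≠ v := fun h => hvr (h ▸ hu)
        have hul : u ∉ l.internals := fun h => hdisj h hu
        simp [findOr, huv, hul]

lemma rootVar_agrees (x b : ℕ → Bool) (t : ClauseTree) (h : Agrees x b t) :
    rootVar x b t = orLeaves x t := by
  cases t with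
  | leaf i => rfl
  | node v l r => exact h.1

lemma triCount_le (p q r : Bool) : triCount p q r ≤ 2 := by
  cases p <;> cases q <;> cases r <;> decide

lemma triCount_or (p q : Bool) : triCount p q (p || q) = 2 := by
  cases p <;> cases q <;> decide

lemma countSat_le (x b : ℕ → Bool) :
    ∀ t : ClauseTree, countSat x b t ≤ 2 * t.internals.length := by
  intro t
  induction t with
  | leaf i => simp [countSat, internals]
  | node v l r ihl ihr =>
      have := triCount_le (rootVar x b l) (rootVar x b r) (b v)
      simp only [countSat, internals, List.length_cons, List.length_append]
      omega

lemma countSat_agrees (x b : ℕ → Bool) :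
    ∀ t : ClauseTree, Agrees x b t → countSat x b t = 2 * t.internals.length := by
  intro t
  induction t with
  | leaf i => intro _; simp [countSat, internals]
  | node v l r ihl ihr =>
      intro h
      have h1 : b v = (orLeaves x l || orLeaves x r) := h.1
      have h2 := ihl h.2.1
      have h3 := ihr h.2.2
      have h4 : triCount (rootVar x b l) (rootVar x b r) (b v) = 2 := by
        rw [rootVar_agrees x b l h.2.1, rootVar_agrees x b r h.2.2, h1, triCount_or]
      simp only [countSat, internals, List.length_cons, List.length_append, h2, h3, h4]
      ring

lemma leaves_length : ∀ t : ClauseTree, t.leaves.length = t.internals.length + 1 := by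
  intro t
  induction t with
  | leaf i => simp [leaves, internals]
  | node v l r ihl ihr =>
      simp only [leaves, internals, List.length_cons, List.length_append, ihl, ihr]
      omega

lemma orLeaves_eq_true (x : ℕ → Bool) :
    ∀ t : ClauseTree, (orLeaves x t = true ↔ ∃ i ∈ t.leaves, x i = true) := by
  intro t
  induction t with
  | leaf i => simp [orLeaves, leaves]
  | node v l r ihl ihr =>
      simp only [orLeaves, leaves, Bool.or_eq_true, ihl, ihr]
      constructor
      · rintro (⟨i, hi, hx⟩ | ⟨i, hi, hx⟩)
        · exact ⟨i, List.mem_append_left _ hi, hx⟩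
        · exact ⟨i, List.mem_append_right _ hi, hx⟩
      · rintro ⟨i, hi, hx⟩
        rcases List.mem_append.mp hi with h | h
        · exact Or.inl ⟨i, h, hx⟩
        · exact Or.inr ⟨i, h, hx⟩

end ClauseTree

/-!
STATEMENT 15: For k ≥ 2 and any clause tree T for x₁,…,x_k, any assignment
I : {x₁,…,x_k} → {0,1} can be extended to an optimal assignment of Tᵗ(T), satisfying
exactly 2(k−1) of its constraints, by setting every internal auxiliary variable b_v to
the OR of the values of the leaves below v; in particular this optimal extension assigns
the root's variable the value I(x₁ ∨ ⋯ ∨ x_k).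
-/
theorem clause_tree_or_extension_optimal (k : ℕ) (hk : 2 ≤ k)
    (t : ClauseTree) (ht : ClauseTree.IsClauseTree k t) (x : ℕ → Bool) :
    (∃ b : ℕ → Bool, ClauseTree.Agrees x b t) ∧
    ∀ b : ℕ → Bool, ClauseTree.Agrees x b t →
      ClauseTree.countSat x b t = 2 * (k - 1) ∧
      (∀ b' : ℕ → Bool, ClauseTree.countSat x b' t ≤ ClauseTree.countSat x b t) ∧
      (ClauseTree.rootVar x b t = true ↔ ∃ i ∈ Finset.Icc 1 k, x i = true) := by
  obtain ⟨hnd, hmem, hndi⟩ := ht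
  have hlen : t.leaves.length = k := by
    have hfin : t.leaves.toFinset = Finset.Icc 1 k := by
      ext i; simp [← hmem i]
    have := List.toFinset_card_of_nodup hnd
    rw [hfin] at this
    rw [← this, Nat.card_Icc]
    omega
  have hint : t.internals.length = k - 1 := by
    have := ClauseTree.leaves_length t
    omega
  refine ⟨⟨_, ClauseTree.agrees_findOr x t hndi⟩, ?_⟩
  intro b hb
  refine ⟨?_, ?_, ?_⟩
  · rw [ClauseTree.countSat_agrees x b t hb, hint]
  · intro b'
    rw [ClauseTree.countSat_agrees x b t hb]
    exact ClauseTree.countSat_le x b' t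
  · rw [ClauseTree.rootVar_agrees x b t hb, ClauseTree.orLeaves_eq_true x t]
    constructor
    · rintro ⟨i, hi, hx⟩; exact ⟨i, (hmem i).mp hi, hx⟩
    · rintro ⟨i, hi, hx⟩; exact ⟨i, (hmem i).mpr hi, hx⟩
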